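/- Under the genericity condition σ_n(L) > σ_{n+1}([L h]), the matrix P = LᵀL - σ_{n+1}([L h])² I_n is positive definite (hence invertible), and the TLS solution satisfies x = P⁻¹ Lᵀ h whenever (x, -1)ᵀ is an eigenvector of [L h]ᵀ[L h] with eigenvalue σ_{n+1}([L h])². -/

import Mathlib

open Matrix

/-- Under the genericity condition `σ_n(L) > σ_{n+1}([L h])`, the matrix
`P = LᵀL - σ_{n+1}²I` is positive definite, and the TLS solution satisfies
`x = P⁻¹Lᵀh` whenever `(x,-1)ᵀ` is an eigenvector of `[L h]ᵀ[L h]` with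
eigenvalue `σ_{n+1}²`.  Here the fact that `σn` is the smallest singular value
of `L` is encoded by the Rayleigh-quotient lower bound `σn²‖v‖² ≤ vᵀLᵀLv`, and
`σ` stands for `σ_{n+1}([L h]) ≥ 0`. -/
theorem tls_posdef_and_closed_form (m n : ℕ) (hmn : m > n)
    (L : Matrix (Fin m) (Fin n) ℝ) (h : Fin m → ℝ) (σn σ : ℝ)
    (hσ : 0 ≤ σ) (hgen : σn > σ)
    (hσn : ∀ v : Fin n → ℝ, σn ^ 2 * (∑ i, v i ^ 2) ≤ v ⬝ᵥ (Lᵀ *ᵥ (L *ᵥ v))) :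
    (Lᵀ * L - σ ^ 2 • (1 : Matrix (Fin n) (Fin n) ℝ)).PosDef ∧
      ∀ x : Fin n → ℝ,
        (Lᵀ *ᵥ (L *ᵥ x) - Lᵀ *ᵥ h = σ ^ 2 • x ∧ h ⬝ᵥ (L *ᵥ x) - h ⬝ᵥ h = -σ ^ 2) →
        x = (Lᵀ * L - σ ^ 2 • (1 : Matrix (Fin n) (Fin n) ℝ))⁻¹ *ᵥ (Lᵀ *ᵥ h) := by
  set P : Matrix (Fin n) (Fin n) ℝ := Lᵀ * L - σ ^ 2 • (1 : Matrix (Fin n) (Fin n) ℝ) with hP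
  have hσ2 : σ ^ 2 < σn ^ 2 := by nlinarith
  have hpd : P.PosDef := by
    rw [Matrix.posDef_iff_dotProduct_mulVec]
    constructor
    · unfold Matrix.IsHermitian
      rw [hP]
      rw [conjTranspose_sub, conjTranspose_smul, conjTranspose_one, conjTranspose_mul]
      simp [conjTranspose_eq_transpose_of_trivial]
    · intro v hv
      have hvs : 0 < ∑ i, v i ^ 2 := by
        have : ∃ i, v i ≠ 0 := by
          by_contra hc
          push_neg at hc
          exact hv (funext hc)
        obtain ⟨i, hi⟩ := this
        have h1 : 0 < v i ^ 2 := by positivity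
        have h2 : ∀ j ∈ Finset.univ, 0 ≤ v j ^ 2 := fun j _ => sq_nonneg _
        exact Finset.sum_pos' h2 ⟨i, Finset.mem_univ i, h1⟩
      have key := hσn v
      have expand : star v ⬝ᵥ (P *ᵥ v)
          = v ⬝ᵥ (Lᵀ *ᵥ (L *ᵥ v)) - σ ^ 2 * ∑ i, v i ^ 2 := by
        rw [hP]
        rw [sub_mulVec, dotProduct_sub, smul_mulVec, one_mulVec,
          dotProduct_smul, ← mulVec_mulVec]
        simp [star, dotProduct, pow_two, mul_comm, smul_eq_mul]
      rw [expand]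
      nlinarith
  refine ⟨hpd, ?_⟩
  intro x ⟨hx1, _⟩
  have hPx : P *ᵥ x = Lᵀ *ᵥ h := by
    rw [hP, sub_mulVec, smul_mulVec, one_mulVec, ← mulVec_mulVec]
    have := sub_eq_iff_eq_add.mp hx1
    rw [this]
    abel
  have hinv : IsUnit P.det := hpd.det_pos.ne'.isUnit
  calc x = (P⁻¹ * P) *ᵥ x := by rw [Matrix.nonsing_inv_mul P hinv, one_mulVec]
    _ = P⁻¹ *ᵥ (P *ᵥ x) := by rw [← mulVec_mulVec]
    _ = P⁻¹ *ᵥ (Lᵀ *ᵥ h) := by rw [hPx]
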